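/- In L_n^q: (1) for 1 ≤ i ≤ n, z_n x_i = x_i z_n if n is odd, and z_n x_i = q^{(-1)^i} x_i z_n if n is even; consequently z_n is a normal element of L_n^q (z_n L_n^q = L_n^q z_n). (2) For 0 ≤ i < j ≤ n, z_i z_j = q z_j z_i if j is even and i is odd, and z_i z_j = z_j z_i otherwise (i.e. if j is odd, or if i and j are both even). -/

import Mathlib

noncomputable section

open FreeAlgebra

/-- Defining relations of the linear connected quantized Weyl algebra `L_n^q`
(generators indexed `0,…,n-1`, corresponding to `x_1,…,x_n`). -/
inductive LRel (K : Type) [Field K] (n : ℕ) (q : K) :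
    FreeAlgebra K (Fin n) → FreeAlgebra K (Fin n) → Prop
  | adj (i j : Fin n) (h : j.1 = i.1 + 1) :
      LRel K n q (ι K i * ι K j)
        (q • (ι K j * ι K i) + algebraMap K (FreeAlgebra K (Fin n)) (1 - q))
  | far_odd (i j : Fin n) (h : i.1 + 1 < j.1) (ho : Odd (j.1 - i.1)) :
      LRel K n q (ι K i * ι K j) (q • (ι K j * ι K i))
  | far_even (i j : Fin n) (h : i.1 + 1 < j.1) (he : Even (j.1 - i.1)) :
      LRel K n q (ι K i * ι K j) (q⁻¹ • (ι K j * ι K i))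

/-- The linear connected quantized Weyl algebra `L_n^q`. -/
abbrev LWeyl (K : Type) [Field K] (n : ℕ) (q : K) := RingQuot (LRel K n q)

/-- The generator `x_m` (1-based) of `L_n^q`. -/
def Lgen (K : Type) [Field K] (n : ℕ) (q : K) (m : ℕ) : LWeyl K n q :=
  if h : m - 1 < n then RingQuot.mkAlgHom K (LRel K n q) (ι K ⟨m - 1, h⟩) else 0

/-- Defining relations of the cyclic connected quantized Weyl algebra `C_n^q`. -/
inductive CRel (K : Type) [Field K] (n : ℕ) (q : K) :
    FreeAlgebra K (Fin n) → FreeAlgebra K (Fin n) → Prop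
  | adj (i j : Fin n) (h : j.1 = i.1 + 1) :
      CRel K n q (ι K i * ι K j)
        (q • (ι K j * ι K i) + algebraMap K (FreeAlgebra K (Fin n)) (1 - q))
  | cyc (i j : Fin n) (hi : i.1 = 0) (hj : j.1 = n - 1) :
      CRel K n q (ι K j * ι K i)
        (q • (ι K i * ι K j) + algebraMap K (FreeAlgebra K (Fin n)) (1 - q))
  | far_odd (i j : Fin n) (h : i.1 + 1 < j.1) (ho : Odd (j.1 - i.1)) :
      CRel K n q (ι K i * ι K j) (q • (ι K j * ι K i))
  | far_even (i j : Fin n) (h : i.1 + 1 < j.1) (hj : j.1 + 1 < n) (he : Even (j.1 - i.1)) :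
      CRel K n q (ι K i * ι K j) (q⁻¹ • (ι K j * ι K i))

/-- The cyclic connected quantized Weyl algebra `C_n^q`. -/
abbrev CWeyl (K : Type) [Field K] (n : ℕ) (q : K) := RingQuot (CRel K n q)

/-- The generator `x_m` (1-based) of `C_n^q`. -/
def Cgen (K : Type) [Field K] (n : ℕ) (q : K) (m : ℕ) : CWeyl K n q :=
  if h : m - 1 < n then RingQuot.mkAlgHom K (CRel K n q) (ι K ⟨m - 1, h⟩) else 0

/-- The shifted sequence of elements `z_{-1} = 0`, `z_0 = 1`, `z_i = z_{i-1} x_i - z_{i-2}`: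
here `zsh x k = z_{k-1}`, where `x` is 1-based access to the generators. -/
def zsh {R : Type} [Ring R] (x : ℕ → R) : ℕ → R
  | 0 => 0
  | 1 => 1
  | (k + 2) => zsh x (k + 1) * x (k + 1) - zsh x k

/-- The standard monomial `x_1^{a_1} ⋯ x_n^{a_n}`. -/
def stdMonomial {R : Type} [Ring R] (n : ℕ) (x : Fin n → R) (a : Fin n → ℕ) : R :=
  ((List.finRange n).map (fun i => x i ^ a i)).prod

/-- The family of standard monomials is a `K`-basis. -/
def IsMonBasis (K : Type) [Field K] {R : Type} [Ring R] [Algebra K R] (n : ℕ)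
    (x : Fin n → R) : Prop :=
  LinearIndependent K (fun a : Fin n → ℕ => stdMonomial n x a) ∧
    Submodule.span K (Set.range (fun a : Fin n → ℕ => stdMonomial n x a)) = ⊤

/-- A two-sided ideal is prime. -/
def IsTwoSidedPrime {R : Type} [Ring R] (P : TwoSidedIdeal R) : Prop :=
  P ≠ ⊤ ∧ ∀ a b : R, (∀ r : R, a * r * b ∈ P) → a ∈ P ∨ b ∈ P

/-- `q` is not a root of unity. -/
def NotRootOfUnity {K : Type} [Field K] (q : K) : Prop :=
  ∀ k : ℕ, 0 < k → q ^ k ≠ 1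

section Work
variable {K : Type} [Field K] {n : ℕ} {q : K}

local notation "X" => Lgen K n q

lemma Lgen_eq (m : ℕ) (h1 : 1 ≤ m) (h2 : m ≤ n) :
    X m = RingQuot.mkAlgHom K (LRel K n q) (ι K ⟨m - 1, by omega⟩) := by
  rw [Lgen, dif_pos]

lemma rel_adj (m : ℕ) (h1 : 1 ≤ m) (h2 : m + 1 ≤ n) :
    X m * X (m + 1) = q • (X (m + 1) * X m) + algebraMap K (LWeyl K n q) (1 - q) := by
  rw [Lgen_eq m h1 (by omega), Lgen_eq (m+1) (by omega) h2, ← map_mul,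
    RingQuot.mkAlgHom_rel K (LRel.adj ⟨m-1, by omega⟩ ⟨m+1-1, by omega⟩
      (by show m + 1 - 1 = m - 1 + 1; omega)),
    map_add, map_smul, map_mul, AlgHom.commutes]

lemma rel_far_odd (i j : ℕ) (h1 : 1 ≤ i) (h : i + 1 < j) (h2 : j ≤ n) (ho : Odd (j - i)) :
    X i * X j = q • (X j * X i) := by
  rw [Lgen_eq i h1 (by omega), Lgen_eq j (by omega) h2, ← map_mul,
    RingQuot.mkAlgHom_rel K (LRel.far_odd ⟨i-1, by omega⟩ ⟨j-1, by omega⟩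
      (by show i - 1 + 1 < j - 1; omega)
      (by show Odd (j - 1 - (i - 1)); rw [(by omega : j - 1 - (i-1) = j - i)]; exact ho)),
    map_smul, map_mul]

lemma rel_far_even (i j : ℕ) (h1 : 1 ≤ i) (h : i + 1 < j) (h2 : j ≤ n) (he : Even (j - i)) :
    X i * X j = q⁻¹ • (X j * X i) := by
  rw [Lgen_eq i h1 (by omega), Lgen_eq j (by omega) h2, ← map_mul,
    RingQuot.mkAlgHom_rel K (LRel.far_even ⟨i-1, by omega⟩ ⟨j-1, by omega⟩
      (by show i - 1 + 1 < j - 1; omega)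
      (by show Even (j - 1 - (i - 1)); rw [(by omega : j - 1 - (i-1) = j - i)]; exact he)),
    map_smul, map_mul]

end Work
section Work2
variable {K : Type} [Field K] {n : ℕ} {q : K}

local notation "X" => Lgen K n q

/-- coefficient `q^{(-1)^m}` -/
def cc (q : K) (m : ℕ) : K := if Even m then q else q⁻¹

/-- commutation coefficient of `z_{t-1} = zsh x t` with `x_m` -/
def eps (q : K) (t m : ℕ) : K := if (Odd t ↔ m < t) then cc q m else 1

lemma cc_ne_zero (hq0 : q ≠ 0) (m : ℕ) : cc q m ≠ 0 := by
  unfold cc; split <;> simp [hq0]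

lemma eps_ne_zero (hq0 : q ≠ 0) (t m : ℕ) : eps q t m ≠ 0 := by
  unfold eps; split; · exact cc_ne_zero hq0 m
  · exact one_ne_zero

lemma eps_ge {t m : ℕ} (h : t ≤ m) : eps q t m = if Even t then cc q m else 1 := by
  unfold eps
  rcases Nat.even_or_odd t with he | ho
  · simp [he, Nat.not_odd_iff_even.2 he, Nat.lt_iff_add_one_le, h, Nat.not_lt.2 h]
  · simp [ho, Nat.not_even_iff_odd.2 ho, Nat.not_lt.2 h]

lemma eps_lt {t m : ℕ} (h : m < t) : eps q t m = if Odd t then cc q m else 1 := by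
  unfold eps
  simp [h]

lemma rel_swap_adj (hq0 : q ≠ 0) (m : ℕ) (h1 : 1 ≤ m) (h2 : m + 1 ≤ n) :
    X (m + 1) * X m =
      q⁻¹ • (X m * X (m + 1)) - q⁻¹ • algebraMap K (LWeyl K n q) (1 - q) := by
  have h := rel_adj (q := q) m h1 h2
  have : q⁻¹ • (X m * X (m+1)) =
      q⁻¹ • (q • (X (m + 1) * X m)) + q⁻¹ • algebraMap K (LWeyl K n q) (1 - q) := by
    rw [h, smul_add]
  rw [smul_smul, inv_mul_cancel₀ hq0, one_smul] at this
  rw [this]; abel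

lemma rel_swap_far (hq0 : q ≠ 0) (i j : ℕ) (h1 : 1 ≤ i) (h : i + 1 < j) (h2 : j ≤ n) :
    X j * X i = (if Odd (j - i) then q⁻¹ else q) • (X i * X j) := by
  rcases Nat.even_or_odd (j - i) with he | ho
  · rw [if_neg (Nat.not_odd_iff_even.2 he)]
    rw [rel_far_even i j h1 h h2 he, smul_smul, mul_inv_cancel₀ hq0, one_smul]
  · rw [if_pos ho, rel_far_odd i j h1 h h2 ho, smul_smul, inv_mul_cancel₀ hq0, one_smul]

lemma zsh_rec {R : Type} [Ring R] (x : ℕ → R) (t : ℕ) :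
    zsh x (t + 2) = zsh x (t + 1) * x (t + 1) - zsh x t := rfl

lemma zsh_mul_self {R : Type} [Ring R] (x : ℕ → R) (t : ℕ) :
    zsh x (t + 1) * x (t + 1) = zsh x (t + 2) + zsh x t := by
  rw [zsh_rec]; abel

end Work2
section Work3
variable {K : Type} [Field K] {n : ℕ} {q : K}

local notation "X" => Lgen K n q
local notation "W" => zsh (Lgen K n q)

lemma mul_algC {R : Type} [Ring R] [Algebra K R] (r : R) (c : K) :
    r * algebraMap K R c = c • r := by
  rw [← Algebra.commutes, ← Algebra.smul_def]

lemma inv_smul_eq {c : K} (hc : c ≠ 0) {M : Type} [AddCommMonoid M] [Module K M]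
    {a b : M} (h : a = c • b) : b = c⁻¹ • a := by
  rw [h, smul_smul, inv_mul_cancel₀ hc, one_smul]

lemma mainPC (hq0 : q ≠ 0) : ∀ t : ℕ,
    (t ≤ n + 1 → ∀ m, 1 ≤ m → m ≤ n → m ≠ t →
      W t * X m = eps q t m • (X m * W t)) ∧
    (1 ≤ t → t ≤ n → X t * W t =
      if Odd t then W (t+1) + q • W (t-1)
      else q⁻¹ • W (t+1) + W (t-1)) := by
  intro t
  induction t using Nat.strong_induction_on with
  | _ t ih =>
  match t with
  | 0 =>
    constructor
    · intro _ m _ _ _; show (0 : LWeyl K n q) * X m = _ • (X m * 0); simp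
    · intro h; omega
  | 1 =>
    constructor
    · intro _ m hm1 hmn hm
      show (1 : LWeyl K n q) * X m = eps q 1 m • (X m * 1)
      have : eps q 1 m = 1 := by
        rw [eps_ge (by omega)]; simp
      rw [this, one_smul, one_mul, mul_one]
    · intro _ h1n
      show X 1 * (1 : LWeyl K n q) = _
      rw [if_pos (by decide : Odd 1)]
      show X 1 * 1 = (1 * X 1 - 0) + q • 0
      simp
  | (t + 2) =>
    -- the C part first
    have Cpart : t + 2 ≤ n → X (t+2) * W (t+2) =
        if Odd (t+2) then W (t+3) + q • W (t+1)
        else q⁻¹ • W (t+3) + W (t+1) := by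
      intro hsn
      have hP1 := (ih (t+1) (by omega)).1 (by omega) (t+2) (by omega) hsn (by omega)
      have hP0 := (ih t (by omega)).1 (by omega) (t+2) (by omega) hsn (by omega)
      have hswap := rel_swap_adj (n := n) hq0 (t+1) (by omega) (by omega)
      have hX1 : X (t+2) * W (t+1) = (eps q (t+1) (t+2))⁻¹ • (W (t+1) * X (t+2)) :=
        inv_smul_eq (eps_ne_zero hq0 _ _) hP1
      have hX0 : X (t+2) * W t = (eps q t (t+2))⁻¹ • (W t * X (t+2)) :=
        inv_smul_eq (eps_ne_zero hq0 _ _) hP0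
      have key : X (t+2) * W (t+2)
          = (eps q (t+1) (t+2))⁻¹ • (q⁻¹ • ((W (t+3) + W (t+1)) + W t * X (t+2))
              - (q⁻¹ * (1-q)) • W (t+1)) - (eps q t (t+2))⁻¹ • (W t * X (t+2)) := by
        calc X (t+2) * W (t+2)
            = (X (t+2) * W (t+1)) * X (t+1) - X (t+2) * W t := by
              rw [zsh_rec, mul_sub, mul_assoc]
          _ = (eps q (t+1) (t+2))⁻¹ • (W (t+1) * (X (t+2) * X (t+1)))
              - (eps q t (t+2))⁻¹ • (W t * X (t+2)) := by
              rw [hX1, hX0, smul_mul_assoc, mul_assoc]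
          _ = (eps q (t+1) (t+2))⁻¹ • (W (t+1) * (q⁻¹ • (X (t+1) * X (t+2))
                - q⁻¹ • algebraMap K (LWeyl K n q) (1-q)))
              - (eps q t (t+2))⁻¹ • (W t * X (t+2)) := by rw [hswap]
          _ = _ := by
              rw [mul_sub, mul_smul_comm, ← mul_assoc, zsh_mul_self _ t, add_mul,
                zsh_mul_self _ (t+1), mul_smul_comm, mul_algC, smul_smul]
      rcases Nat.even_or_odd t with ht | ht
      · have e1 : eps q (t+1) (t+2) = 1 := by
          rw [eps_ge (by omega), if_neg]
          rw [Nat.even_iff] at *; omega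
        have e0 : eps q t (t+2) = q := by
          rw [eps_ge (by omega), if_pos ht]
          unfold cc; rw [if_pos]
          rw [Nat.even_iff] at *; omega
        rw [if_neg (by rw [Nat.even_iff] at ht; rw [Nat.odd_iff]; omega)]
        rw [key, e1, e0]
        match_scalars <;> field_simp <;> ring
      · have e1 : eps q (t+1) (t+2) = q⁻¹ := by
          rw [eps_ge (by omega), if_pos (by rw [Nat.odd_iff] at ht; rw [Nat.even_iff]; omega)]
          unfold cc; rw [if_neg]
          rw [Nat.odd_iff] at ht; rw [Nat.even_iff]; omega
        have e0 : eps q t (t+2) = 1 := by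
          rw [eps_ge (by omega), if_neg (Nat.not_even_iff_odd.2 ht)]
        rw [if_pos (by rw [Nat.odd_iff] at *; omega)]
        rw [key, e1, e0]
        match_scalars <;> field_simp <;> ring
    refine ⟨?_, fun _ h => Cpart h⟩
    intro htn m hm1 hmn hm
    have shared : m ≠ t → m ≠ t+1 →
        X (t+1) * X m = (eps q t m * (eps q (t+1) m)⁻¹) • (X m * X (t+1)) →
        eps q (t+2) m = eps q t m →
        W (t+2) * X m = eps q (t+2) m • (X m * W (t+2)) := by
      intro hm0 hm1' hd heq
      have hP1m := (ih (t+1) (by omega)).1 (by omega) m hm1 hmn hm1'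
      have hP0m := (ih t (by omega)).1 (by omega) m hm1 hmn hm0
      have hsc : eps q t m * (eps q (t+1) m)⁻¹ * eps q (t+1) m = eps q t m := by
        rw [mul_assoc, inv_mul_cancel₀ (eps_ne_zero hq0 _ _), mul_one]
      calc W (t+2) * X m
          = W (t+1) * (X (t+1) * X m) - W t * X m := by rw [zsh_rec, sub_mul, mul_assoc]
        _ = (eps q t m * (eps q (t+1) m)⁻¹) • ((W (t+1) * X m) * X (t+1))
            - eps q t m • (X m * W t) := by
            rw [hd, mul_smul_comm, hP0m, ← mul_assoc]
        _ = (eps q t m * (eps q (t+1) m)⁻¹ * eps q (t+1) m) •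
              (X m * (W (t+1) * X (t+1))) - eps q t m • (X m * W t) := by
            rw [hP1m, smul_mul_assoc, smul_smul, mul_assoc (Lgen K n q m)]
        _ = eps q t m • (X m * (W (t+2) + W t)) - eps q t m • (X m * W t) := by
            rw [hsc, zsh_mul_self]
        _ = eps q (t+2) m • (X m * W (t+2)) := by
            rw [heq, mul_add, smul_add]; abel
    rcases lt_trichotomy m t with hmt | rfl | hmt
    · -- m < t
      apply shared (by omega) (by omega)
      · have h1 : eps q t m * (eps q (t+1) m)⁻¹ = if Odd (t+1-m) then q⁻¹ else q := by
          rw [eps_lt (by omega), eps_lt (by omega)]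
          unfold cc
          simp only [Nat.odd_iff, Nat.even_iff]
          split_ifs <;> first | omega | field_simp
        rw [h1]
        exact rel_swap_far (n := n) (q := q) hq0 m (t+1) hm1 (by omega) (by omega)
      · rw [eps_lt (by omega), eps_lt (by omega)]
        simp only [Nat.odd_iff]
        rw [(by omega : (t+2) % 2 = t % 2)]
    · -- m = t (t has been substituted by m in context)
      obtain ⟨s, rfl⟩ : ∃ s, m = s + 1 := ⟨m - 1, by omega⟩
      show W (s+3) * X (s+1) = eps q (s+3) (s+1) • (X (s+1) * W (s+3))
      have hC0 : X (s+1) * W (s+1)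
          = if Odd (s+1) then W (s+2) + q • W s else q⁻¹ • W (s+2) + W s :=
        (ih (s+1) (by omega)).2 (by omega) (by omega)
      have hP1m : W (s+2) * X (s+1) = eps q (s+2) (s+1) • (X (s+1) * W (s+2)) :=
        (ih (s+2) (by omega)).1 (by omega) (s+1) (by omega) hmn (by omega)
      have hswapt := rel_swap_adj (n := n) hq0 (s+1) (by omega) (by omega)
      have key : W (s+3) * X (s+1)
          = (q⁻¹ * eps q (s+2) (s+1)) • (X (s+1) * W (s+3) + X (s+1) * W (s+1))
            - (q⁻¹*(1-q)) • W (s+2) - (W (s+2) + W s) := by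
        calc W (s+3) * X (s+1)
            = W (s+2) * (X (s+2) * X (s+1)) - W (s+1) * X (s+1) := by
              rw [zsh_rec, sub_mul, mul_assoc]
          _ = W (s+2) * (q⁻¹ • (X (s+1) * X (s+2))
                - q⁻¹ • algebraMap K (LWeyl K n q) (1-q)) - (W (s+2) + W s) := by
              rw [hswapt, zsh_mul_self]
          _ = q⁻¹ • ((W (s+2) * X (s+1)) * X (s+2)) - (q⁻¹ * (1-q)) • W (s+2)
              - (W (s+2) + W s) := by
              rw [mul_sub, mul_smul_comm, mul_smul_comm, mul_algC, smul_smul, ← mul_assoc]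
          _ = q⁻¹ • (eps q (s+2) (s+1) • (X (s+1) * (W (s+3) + W (s+1))))
              - (q⁻¹ * (1-q)) • W (s+2) - (W (s+2) + W s) := by
              rw [hP1m, smul_mul_assoc, mul_assoc, zsh_mul_self]
          _ = _ := by rw [smul_smul, mul_add]
      rcases Nat.even_or_odd s with hs | hs
      · have e1 : eps q (s+2) (s+1) = 1 := by
          rw [eps_lt (by omega), if_neg]
          rw [Nat.even_iff] at hs; rw [Nat.odd_iff]; omega
        have e2 : eps q (s+3) (s+1) = q⁻¹ := by
          rw [eps_lt (by omega), if_pos (by rw [Nat.even_iff] at hs; rw [Nat.odd_iff]; omega)]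
          unfold cc; rw [if_neg]
          rw [Nat.even_iff] at hs ⊢; omega
        have ho1 : Odd (s+1) := by rw [Nat.even_iff] at hs; rw [Nat.odd_iff]; omega
        rw [if_pos ho1] at hC0
        rw [key, e1, e2, hC0]
        match_scalars <;> field_simp <;> ring
      · have e1 : eps q (s+2) (s+1) = q := by
          rw [eps_lt (by omega), if_pos (by rw [Nat.odd_iff] at hs ⊢; omega)]
          unfold cc; rw [if_pos]
          rw [Nat.odd_iff] at hs; rw [Nat.even_iff]; omega
        have e2 : eps q (s+3) (s+1) = 1 := by
          rw [eps_lt (by omega), if_neg]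
          rw [Nat.odd_iff] at hs ⊢; omega
        have hno1 : ¬ Odd (s+1) := by rw [Nat.odd_iff] at hs ⊢; omega
        rw [if_neg hno1] at hC0
        rw [key, e1, e2, hC0, one_smul]
        match_scalars <;> field_simp <;> ring
    · rcases (by omega : m = t + 1 ∨ t + 3 ≤ m) with rfl | hmt'
      · -- m = t+1
        have hC1 : X (t+1) * W (t+1)
            = if Odd (t+1) then W (t+2) + q • W t else q⁻¹ • W (t+2) + W t :=
          (ih (t+1) (by omega)).2 (by omega) (by omega)
        have hP0m := (ih t (by omega)).1 (by omega) (t+1) (by omega) hmn (by omega)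
        have hX0 : X (t+1) * W t = (eps q t (t+1))⁻¹ • (W t * X (t+1)) :=
          inv_smul_eq (eps_ne_zero hq0 _ _) hP0m
        have key : X (t+1) * W (t+2)
            = (X (t+1) * W (t+1)) * X (t+1) - X (t+1) * W t := by
          rw [zsh_rec, mul_sub, ← mul_assoc]
        rw [hC1, hX0] at key
        rcases Nat.even_or_odd t with ht | ht
        · have e0 : eps q t (t+1) = q⁻¹ := by
            rw [eps_ge (by omega), if_pos ht]
            unfold cc; rw [if_neg]
            rw [Nat.even_iff] at ht ⊢; omega
          have e2 : eps q (t+2) (t+1) = 1 := by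
            rw [eps_lt (by omega), if_neg]
            rw [Nat.even_iff] at ht; rw [Nat.odd_iff]; omega
          have ho1 : Odd (t+1) := by rw [Nat.even_iff] at ht; rw [Nat.odd_iff]; omega
          rw [if_pos ho1, e0] at key
          have hcomm : X (t+1) * W (t+2) = W (t+2) * X (t+1) := by
            rw [key, add_mul, smul_mul_assoc]
            match_scalars <;> field_simp <;> ring
          rw [e2, one_smul, hcomm]
        · have e0 : eps q t (t+1) = 1 := by
            rw [eps_ge (by omega), if_neg (Nat.not_even_iff_odd.2 ht)]
          have e2 : eps q (t+2) (t+1) = q := by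
            rw [eps_lt (by omega), if_pos (by rw [Nat.odd_iff] at ht ⊢; omega)]
            unfold cc; rw [if_pos]
            rw [Nat.odd_iff] at ht; rw [Nat.even_iff]; omega
          have hno1 : ¬ Odd (t+1) := by rw [Nat.odd_iff] at ht ⊢; omega
          rw [if_neg hno1, e0] at key
          have hcomm : X (t+1) * W (t+2) = q⁻¹ • (W (t+2) * X (t+1)) := by
            rw [key, add_mul, smul_mul_assoc]
            match_scalars <;> field_simp <;> ring
          have h2 := inv_smul_eq (inv_ne_zero hq0) hcomm
          rw [inv_inv] at h2
          rw [e2]; exact h2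
      · -- m ≥ t+3
        apply shared (by omega) (by omega)
        · have h1 : eps q t m * (eps q (t+1) m)⁻¹ = if Odd (m - (t+1)) then q else q⁻¹ := by
            rw [eps_ge (by omega), eps_ge (by omega)]
            unfold cc
            simp only [Nat.odd_iff, Nat.even_iff]
            split_ifs <;> first | omega | field_simp
          rw [h1]
          rcases Nat.even_or_odd (m - (t+1)) with he | ho
          · rw [if_neg (Nat.not_odd_iff_even.2 he)]
            exact rel_far_even (t+1) m (by omega) (by omega) hmn he
          · rw [if_pos ho]
            exact rel_far_odd (t+1) m (by omega) (by omega) hmn ho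
        · rw [eps_ge (by omega), eps_ge (by omega)]
          simp only [Nat.even_iff]
          rw [(by omega : (t+2) % 2 = t % 2)]

end Work3
section Work4
variable {K : Type} [Field K] {n : ℕ} {q : K}

local notation "X" => Lgen K n q
local notation "W" => zsh (Lgen K n q)

lemma zz (hq0 : q ≠ 0) : ∀ b a : ℕ, a < b → b ≤ n + 1 →
    W a * W b = (if Odd b ∧ Even a then q else 1) • (W b * W a) := by
  intro b
  induction b using Nat.strong_induction_on with
  | _ b ih =>
  intro a hab hbn
  rcases Nat.eq_zero_or_pos a with rfl | ha
  · show (0 : LWeyl K n q) * W b = _ • (W b * 0)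
    simp
  · obtain ⟨s, rfl⟩ : ∃ s, a = s + 1 := ⟨a - 1, by omega⟩
    obtain ⟨r, rfl⟩ : ∃ r, b = r + 2 := ⟨b - 2, by omega⟩
    have htri : s = r ∨ s + 1 = r ∨ s + 2 ≤ r := by omega
    rcases htri with rfl | rfl | hr
    · -- b = s+2 : adjacent
      have hC : X (s+1) * W (s+1)
          = if Odd (s+1) then W (s+2) + q • W s else q⁻¹ • W (s+2) + W s :=
        (mainPC hq0 (s+1)).2 (by omega) (by omega)
      have hrel : W s * W (s+1) = (if Odd (s+1) ∧ Even s then q else 1) • (W (s+1) * W s) :=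
        ih (s+1) (by omega) s (by omega) (by omega)
      have key : W (s+2) * W (s+1)
          = W (s+1) * (X (s+1) * W (s+1)) - W s * W (s+1) := by
        rw [zsh_rec, sub_mul, mul_assoc]
      rw [key, hC, hrel]
      simp only [Nat.odd_iff, Nat.even_iff]
      split_ifs <;> first
        | omega
        | (simp only [mul_add, add_mul, mul_sub, sub_mul, mul_smul_comm, smul_mul_assoc,
            smul_smul, smul_add, smul_sub, mul_assoc]
           match_scalars <;> field_simp <;> ring)
    · -- b = s+3
      have hrel : W (s+1) * W (s+2)
          = (if Odd (s+2) ∧ Even (s+1) then q else 1) • (W (s+2) * W (s+1)) :=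
        ih (s+2) (by omega) (s+1) (by omega) (by omega)
      have hP : W (s+1) * X (s+2) = eps q (s+1) (s+2) • (X (s+2) * W (s+1)) :=
        (mainPC hq0 (s+1)).1 (by omega) (s+2) (by omega) (by omega) (by omega)
      have key : W (s+1) * W (s+3)
          = ((if Odd (s+2) ∧ Even (s+1) then q else 1) * eps q (s+1) (s+2)) •
              ((W (s+3) + W (s+1)) * W (s+1)) - W (s+1) * W (s+1) := by
        calc W (s+1) * W (s+3)
            = (W (s+1) * W (s+2)) * X (s+2) - W (s+1) * W (s+1) := by
              rw [zsh_rec, mul_sub, ← mul_assoc]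
          _ = (if Odd (s+2) ∧ Even (s+1) then q else 1) •
                (W (s+2) * (W (s+1) * X (s+2))) - W (s+1) * W (s+1) := by
              rw [hrel, smul_mul_assoc, mul_assoc]
          _ = ((if Odd (s+2) ∧ Even (s+1) then q else 1) * eps q (s+1) (s+2)) •
                ((W (s+2) * X (s+2)) * W (s+1)) - W (s+1) * W (s+1) := by
              rw [hP, mul_smul_comm, smul_smul, ← mul_assoc]
          _ = _ := by rw [zsh_mul_self]
      rw [key, eps_ge (by omega)]
      unfold cc
      simp only [Nat.odd_iff, Nat.even_iff]
      split_ifs <;> first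
        | omega
        | (simp only [mul_add, add_mul, mul_sub, sub_mul, mul_smul_comm, smul_mul_assoc,
            smul_smul, smul_add, smul_sub, mul_assoc]
           match_scalars <;> field_simp <;> ring)
    · -- b = r+2, r ≥ s+2
      have hrel1 : W (s+1) * W (r+1)
          = (if Odd (r+1) ∧ Even (s+1) then q else 1) • (W (r+1) * W (s+1)) :=
        ih (r+1) (by omega) (s+1) (by omega) (by omega)
      have hrel2 : W (s+1) * W r
          = (if Odd r ∧ Even (s+1) then q else 1) • (W r * W (s+1)) :=
        ih r (by omega) (s+1) (by omega) (by omega)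
      have hP : W (s+1) * X (r+1) = eps q (s+1) (r+1) • (X (r+1) * W (s+1)) :=
        (mainPC hq0 (s+1)).1 (by omega) (r+1) (by omega) (by omega) (by omega)
      have key : W (s+1) * W (r+2)
          = ((if Odd (r+1) ∧ Even (s+1) then q else 1) * eps q (s+1) (r+1)) •
              ((W (r+2) + W r) * W (s+1))
            - (if Odd r ∧ Even (s+1) then q else 1) • (W r * W (s+1)) := by
        calc W (s+1) * W (r+2)
            = (W (s+1) * W (r+1)) * X (r+1) - W (s+1) * W r := by
              rw [zsh_rec, mul_sub, ← mul_assoc]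
          _ = (if Odd (r+1) ∧ Even (s+1) then q else 1) •
                (W (r+1) * (W (s+1) * X (r+1)))
              - (if Odd r ∧ Even (s+1) then q else 1) • (W r * W (s+1)) := by
              rw [hrel1, hrel2, smul_mul_assoc, mul_assoc]
          _ = ((if Odd (r+1) ∧ Even (s+1) then q else 1) * eps q (s+1) (r+1)) •
                ((W (r+1) * X (r+1)) * W (s+1))
              - (if Odd r ∧ Even (s+1) then q else 1) • (W r * W (s+1)) := by
              rw [hP, mul_smul_comm, smul_smul, ← mul_assoc]
          _ = _ := by rw [zsh_mul_self]
      rw [key, eps_ge (by omega)]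
      unfold cc
      simp only [Nat.odd_iff, Nat.even_iff]
      split_ifs <;> first
        | omega
        | (simp only [mul_add, add_mul, mul_sub, sub_mul, mul_smul_comm, smul_mul_assoc,
            smul_smul, smul_add, smul_sub, mul_assoc]
           match_scalars <;> field_simp <;> ring)

end Work4
section Work5
variable {K : Type} [Field K] {n : ℕ} {q : K}

local notation "X" => Lgen K n q
local notation "W" => zsh (Lgen K n q)

lemma mk_i_eq (hn : 1 ≤ n) (i : Fin n) :
    RingQuot.mkAlgHom K (LRel K n q) (ι K i) = X (i.1 + 1) := by
  rw [Lgen_eq (i.1+1) (by omega) (by omega : i.1 + 1 ≤ n)]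
  have h : (⟨i.1 + 1 - 1, by omega⟩ : Fin n) = i := Fin.ext (show i.1 + 1 - 1 = i.1 by omega)
  rw [h]

lemma normal_fwd (hq0 : q ≠ 0) (hn : 1 ≤ n) (y : LWeyl K n q) :
    ∃ b, W (n+1) * y = b * W (n+1) := by
  obtain ⟨f, rfl⟩ := RingQuot.mkAlgHom_surjective K (LRel K n q) y
  induction f using FreeAlgebra.induction with
  | grade0 k =>
    exact ⟨algebraMap K _ k, by rw [AlgHom.commutes]; exact (Algebra.commutes k _).symm⟩
  | grade1 i =>
    refine ⟨eps q (n+1) (i.1+1) • X (i.1+1), ?_⟩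
    rw [mk_i_eq hn i,
      (mainPC (n := n) hq0 (n+1)).1 (le_refl _) (i.1+1) (by omega) (by omega) (by omega),
      smul_mul_assoc]
  | mul a b ha hb =>
    obtain ⟨b1, h1⟩ := ha
    obtain ⟨b2, h2⟩ := hb
    exact ⟨b1 * b2, by rw [map_mul, ← mul_assoc, h1, mul_assoc, h2, ← mul_assoc]⟩
  | add a b ha hb =>
    obtain ⟨b1, h1⟩ := ha
    obtain ⟨b2, h2⟩ := hb
    exact ⟨b1 + b2, by rw [map_add, mul_add, h1, h2, add_mul]⟩

lemma normal_bwd (hq0 : q ≠ 0) (hn : 1 ≤ n) (y : LWeyl K n q) :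
    ∃ b, y * W (n+1) = W (n+1) * b := by
  obtain ⟨f, rfl⟩ := RingQuot.mkAlgHom_surjective K (LRel K n q) y
  induction f using FreeAlgebra.induction with
  | grade0 k =>
    exact ⟨algebraMap K _ k, by rw [AlgHom.commutes]; exact Algebra.commutes k _⟩
  | grade1 i =>
    refine ⟨(eps q (n+1) (i.1+1))⁻¹ • X (i.1+1), ?_⟩
    have h := inv_smul_eq (eps_ne_zero hq0 (n+1) (i.1+1))
      ((mainPC (n := n) hq0 (n+1)).1 (le_refl _) (i.1+1) (by omega) (by omega) (by omega))
    rw [mk_i_eq hn i, h, mul_smul_comm]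
  | mul a b ha hb =>
    obtain ⟨b1, h1⟩ := ha
    obtain ⟨b2, h2⟩ := hb
    exact ⟨b1 * b2, by rw [map_mul, mul_assoc, h2, ← mul_assoc, h1, mul_assoc]⟩
  | add a b ha hb =>
    obtain ⟨b1, h1⟩ := ha
    obtain ⟨b2, h2⟩ := hb
    exact ⟨b1 + b2, by rw [map_add, add_mul, h1, h2, mul_add]⟩

end Work5

/-- Corollary 3.5: in `L_n^q`: (1) `z_n x_i = x_i z_n` if `n` is odd and
`z_n x_i = q^{(-1)^i} x_i z_n` if `n` is even, for `1 ≤ i ≤ n`; consequently `z_n` is a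
normal element (`z_n L_n^q = L_n^q z_n`).  (2) For `0 ≤ i < j ≤ n`, `z_i z_j = q z_j z_i`
if `j` is even and `i` is odd, and `z_i z_j = z_j z_i` otherwise. -/
theorem stmt7 (K : Type) [Field K] [IsAlgClosed K] (n : ℕ) (hn : 3 ≤ n) (q : K)
    (hq0 : q ≠ 0) (hq1 : q ≠ 1) :
    let x : ℕ → LWeyl K n q := Lgen K n q
    let z : ℕ → LWeyl K n q := fun j => zsh x (j + 1)
    (∀ i : ℕ, 1 ≤ i → i ≤ n →
        (Odd n → z n * x i = x i * z n) ∧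
        (Even n → z n * x i = (q ^ ((-1 : ℤ) ^ i)) • (x i * z n))) ∧
      ({w : LWeyl K n q | ∃ a, w = z n * a} = {w : LWeyl K n q | ∃ a, w = a * z n}) ∧
      (∀ i j : ℕ, i < j → j ≤ n →
        (Even j → Odd i → z i * z j = q • (z j * z i)) ∧
        (Odd j ∨ (Even j ∧ Even i) → z i * z j = z j * z i)) := by
  intro x z
  have hz : ∀ j, z j = zsh (Lgen K n q) (j+1) := fun _ => rfl
  have hx : ∀ m, x m = Lgen K n q m := fun _ => rfl
  refine ⟨?_, ?_, ?_⟩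
  · intro i hi1 hin
    have hP := (mainPC (n := n) hq0 (n+1)).1 (le_refl (n+1)) i hi1 hin (by omega)
    rw [eps_lt (by omega)] at hP
    constructor
    · intro hodd
      rw [hz, hx, hP, if_neg, one_smul]
      rw [Nat.odd_iff] at hodd ⊢; omega
    · intro heven
      rw [hz, hx, hP,
        if_pos (by rw [Nat.even_iff] at heven; rw [Nat.odd_iff]; omega)]
      congr 1
      unfold cc
      rcases Nat.even_or_odd i with hi | hi
      · rw [if_pos hi, Even.neg_one_pow hi, zpow_one]
      · rw [if_neg (Nat.not_even_iff_odd.2 hi), Odd.neg_one_pow hi, zpow_neg_one]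
  · ext w
    simp only [Set.mem_setOf_eq]
    constructor
    · rintro ⟨a, rfl⟩
      obtain ⟨b, hb⟩ := normal_fwd (n := n) hq0 (by omega) a
      exact ⟨b, hb⟩
    · rintro ⟨a, rfl⟩
      obtain ⟨b, hb⟩ := normal_bwd (n := n) hq0 (by omega) a
      exact ⟨b, hb⟩
  · intro i j hij hjn
    have h := zz (n := n) hq0 (j+1) (i+1) (by omega) (by omega)
    constructor
    · intro hej hoi
      rw [hz, hz, h, if_pos]
      constructor
      · rw [Nat.even_iff] at hej; rw [Nat.odd_iff]; omega
      · rw [Nat.odd_iff] at hoi; rw [Nat.even_iff]; omega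
    · intro hcase
      rw [hz, hz, h, if_neg, one_smul]
      rintro ⟨h1, h2⟩
      rcases hcase with hoj | ⟨hej, hei⟩
      · rw [Nat.odd_iff] at hoj h1; omega
      · rw [Nat.even_iff] at hei h2; omega

end
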